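/- Let t be a positive integer, let k be an integer with 0 ≤ k ≤ ⌊t/2⌋, and let v be a k-vertex of G_t. For an integer s with 0 ≤ s ≤ ⌊t/2⌋, there exists an s-vertex of G_t orthogonal to v if and only if s ≥ ⌈t/2⌉ − k (equivalently, if and only if 2s + 2k − t ≥ 0). -/

import Mathlib

open Finset

/-- A ±1-vector of length `4t`. -/
def IsPMVector (t : ℕ) (v : Fin (4 * t) → ℤ) : Prop :=
  ∀ i, v i = 1 ∨ v i = -1

/-- Orthogonality of vectors of length `4t`. -/
def Orth (t : ℕ) (v w : Fin (4 * t) → ℤ) : Prop :=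
  ∑ i, v i * w i = 0

/-- First normalized row: all ones. -/
def r1 (t : ℕ) : Fin (4 * t) → ℤ := fun _ => 1

/-- Second normalized row: `1` on Q1 ∪ Q2, `-1` on Q3 ∪ Q4. -/
def r2 (t : ℕ) : Fin (4 * t) → ℤ := fun i => if (i : ℕ) < 2 * t then 1 else -1

/-- Third normalized row: `1` on Q1 ∪ Q3, `-1` on Q2 ∪ Q4. -/
def r3 (t : ℕ) : Fin (4 * t) → ℤ :=
  fun i => if (i : ℕ) < t ∨ (2 * t ≤ (i : ℕ) ∧ (i : ℕ) < 3 * t) then 1 else -1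

/-- A vertex of the Hadamard graph `G_t`: a ±1-vector of length `4t`
orthogonal to each of the three normalized rows. -/
def IsVertex (t : ℕ) (v : Fin (4 * t) → ℤ) : Prop :=
  IsPMVector t v ∧ Orth t v (r1 t) ∧ Orth t v (r2 t) ∧ Orth t v (r3 t)

/-- Number of entries of `v` equal to `-1` in quarter `Qⱼ₊₁ = [j*t, (j+1)*t)`, `j = 0,1,2,3`. -/
def negCount (t : ℕ) (v : Fin (4 * t) → ℤ) (j : ℕ) : ℕ :=
  (univ.filter fun i : Fin (4 * t) =>
    j * t ≤ (i : ℕ) ∧ (i : ℕ) < (j + 1) * t ∧ v i = -1).card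

/-- A `k`-vertex of `G_t`: a vertex with exactly `k` entries equal to `-1` in the
first quarter. -/
def IsKVertex (t k : ℕ) (v : Fin (4 * t) → ℤ) : Prop :=
  IsVertex t v ∧ negCount t v 0 = k

/- ### Auxiliary material -/

lemma sum_pm {n : ℕ} (v : Fin n → ℤ) (S : Finset (Fin n))
    (hv : ∀ i ∈ S, v i = 1 ∨ v i = -1) :
    ∑ i ∈ S, v i = (S.card : ℤ) - 2 * ((S.filter fun i => v i = -1).card : ℤ) := by
  have h := Finset.sum_filter_add_sum_filter_not S (fun i => v i = -1) v
  have h1 : ∑ i ∈ S.filter (fun i => v i = -1), v i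
      = -(((S.filter fun i => v i = -1).card : ℤ)) := by
    rw [Finset.sum_congr rfl (fun i hi => (Finset.mem_filter.mp hi).2)]
    simp
  have h2 : ∑ i ∈ S.filter (fun i => ¬ v i = -1), v i
      = (((S.filter fun i => ¬ v i = -1).card : ℤ)) := by
    have hone : ∀ i ∈ S.filter (fun i => ¬ v i = -1), v i = 1 := by
      intro i hi
      rcases hv i (Finset.mem_filter.mp hi).1 with h' | h'
      · exact h'
      · exact absurd h' (Finset.mem_filter.mp hi).2
    rw [Finset.sum_congr rfl hone]
    simp
  have h3 := Finset.card_filter_add_card_filter_not (s := S) (p := fun i => v i = -1)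
  rw [← h, h1, h2]
  omega

lemma card_filter_Ico (n a b : ℕ) (hb : b ≤ n) :
    (univ.filter fun i : Fin n => a ≤ (i:ℕ) ∧ (i:ℕ) < b).card = b - a := by
  rw [← Nat.card_Ico a b]
  refine Finset.card_nbij (fun i => (i : ℕ)) ?_ ?_ ?_
  · intro i hi
    simp at hi ⊢
    omega
  · intro i hi j hj hij
    exact Fin.val_injective hij
  · intro m hm
    simp at hm ⊢
    exact ⟨⟨m, by omega⟩, ⟨by simpa using hm.1, by simpa using hm.2⟩, rfl⟩

/-- The `j`-th quarter as a finset. -/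
def Qset (t j : ℕ) : Finset (Fin (4 * t)) :=
  univ.filter fun i => j * t ≤ (i : ℕ) ∧ (i : ℕ) < (j + 1) * t

lemma mem_Qset {t j : ℕ} {i : Fin (4 * t)} :
    i ∈ Qset t j ↔ j * t ≤ (i : ℕ) ∧ (i : ℕ) < (j + 1) * t := by
  simp [Qset]

lemma card_Qset (t j : ℕ) (hj : j < 4) : (Qset t j).card = t := by
  rw [Qset, card_filter_Ico _ _ _ (by nlinarith), Nat.succ_mul]
  omega

lemma disjoint_Qset (t : ℕ) {i j : ℕ} (hi : i < 4) (hj : j < 4) (h : i ≠ j) :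
    Disjoint (Qset t i) (Qset t j) := by
  rw [Finset.disjoint_left]
  intro a h1 h2
  rw [mem_Qset] at h1 h2
  interval_cases i <;> interval_cases j <;> omega

lemma sum_split {t : ℕ} (f : Fin (4*t) → ℤ) :
    ∑ i, f i = ∑ i ∈ Qset t 0, f i + ∑ i ∈ Qset t 1, f i
      + ∑ i ∈ Qset t 2, f i + ∑ i ∈ Qset t 3, f i := by
  rw [← Finset.sum_filter_add_sum_filter_not univ (fun i : Fin (4*t) => (i:ℕ) < 2*t) f]
  rw [← Finset.sum_filter_add_sum_filter_not (univ.filter (fun i : Fin (4*t) => (i:ℕ) < 2*t))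
        (fun i : Fin (4*t) => (i:ℕ) < t) f]
  rw [← Finset.sum_filter_add_sum_filter_not (univ.filter (fun i : Fin (4*t) => ¬ (i:ℕ) < 2*t))
        (fun i : Fin (4*t) => (i:ℕ) < 3*t) f]
  have e0 : (univ.filter (fun i : Fin (4*t) => (i:ℕ) < 2*t)).filter
      (fun i : Fin (4*t) => (i:ℕ) < t) = Qset t 0 := by
    ext i; simp [Qset]; omega
  have e1 : (univ.filter (fun i : Fin (4*t) => (i:ℕ) < 2*t)).filter
      (fun i : Fin (4*t) => ¬ (i:ℕ) < t) = Qset t 1 := by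
    ext i; simp [Qset]; omega
  have e2 : (univ.filter (fun i : Fin (4*t) => ¬ (i:ℕ) < 2*t)).filter
      (fun i : Fin (4*t) => (i:ℕ) < 3*t) = Qset t 2 := by
    ext i; simp [Qset]
  have e3 : (univ.filter (fun i : Fin (4*t) => ¬ (i:ℕ) < 2*t)).filter
      (fun i : Fin (4*t) => ¬ (i:ℕ) < 3*t) = Qset t 3 := by
    ext i; simp [Qset]; omega
  rw [e0, e1, e2, e3]
  ring

lemma card_split {t : ℕ} (p : Fin (4*t) → Prop) [DecidablePred p] :
    (univ.filter p).card = ((Qset t 0).filter p).card + ((Qset t 1).filter p).card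
      + ((Qset t 2).filter p).card + ((Qset t 3).filter p).card := by
  have h := sum_split (t := t) (fun i => if p i then (1:ℤ) else 0)
  simp only [Finset.sum_boole] at h
  exact_mod_cast h

lemma negCount_eq {t : ℕ} (v : Fin (4 * t) → ℤ) (j : ℕ) :
    negCount t v j = ((Qset t j).filter fun i => v i = -1).card := by
  rw [negCount, Qset, Finset.filter_filter]
  congr 1
  ext i
  simp [Finset.mem_filter, and_assoc]

lemma quarter_sum {t : ℕ} {v : Fin (4 * t) → ℤ} (hv : IsPMVector t v) {j : ℕ} (hj : j < 4) :
    ∑ i ∈ Qset t j, v i = (t : ℤ) - 2 * (negCount t v j : ℤ) := by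
  rw [sum_pm v _ (fun i _ => hv i), card_Qset t j hj, negCount_eq]

lemma sum_r1 {t : ℕ} (v : Fin (4 * t) → ℤ) :
    ∑ i, v i * r1 t i = ∑ i ∈ Qset t 0, v i + ∑ i ∈ Qset t 1, v i
      + ∑ i ∈ Qset t 2, v i + ∑ i ∈ Qset t 3, v i := by
  simp only [r1, mul_one]
  exact sum_split v

lemma sum_r2 {t : ℕ} (v : Fin (4 * t) → ℤ) :
    ∑ i, v i * r2 t i = ∑ i ∈ Qset t 0, v i + ∑ i ∈ Qset t 1, v i
      - ∑ i ∈ Qset t 2, v i - ∑ i ∈ Qset t 3, v i := by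
  rw [sum_split (fun i => v i * r2 t i)]
  have c0 : ∑ i ∈ Qset t 0, v i * r2 t i = ∑ i ∈ Qset t 0, v i :=
    Finset.sum_congr rfl fun i hi => by
      have h := mem_Qset.mp hi
      rw [r2, if_pos (by omega), mul_one]
  have c1 : ∑ i ∈ Qset t 1, v i * r2 t i = ∑ i ∈ Qset t 1, v i :=
    Finset.sum_congr rfl fun i hi => by
      have h := mem_Qset.mp hi
      rw [r2, if_pos (by omega), mul_one]
  have c2 : ∑ i ∈ Qset t 2, v i * r2 t i = -∑ i ∈ Qset t 2, v i := by
    rw [← Finset.sum_neg_distrib]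
    refine Finset.sum_congr rfl fun i hi => ?_
    have h := mem_Qset.mp hi
    rw [r2, if_neg (by omega)]
    ring
  have c3 : ∑ i ∈ Qset t 3, v i * r2 t i = -∑ i ∈ Qset t 3, v i := by
    rw [← Finset.sum_neg_distrib]
    refine Finset.sum_congr rfl fun i hi => ?_
    have h := mem_Qset.mp hi
    rw [r2, if_neg (by omega)]
    ring
  rw [c0, c1, c2, c3]
  ring

lemma sum_r3 {t : ℕ} (v : Fin (4 * t) → ℤ) :
    ∑ i, v i * r3 t i = ∑ i ∈ Qset t 0, v i - ∑ i ∈ Qset t 1, v i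
      + ∑ i ∈ Qset t 2, v i - ∑ i ∈ Qset t 3, v i := by
  rw [sum_split (fun i => v i * r3 t i)]
  have c0 : ∑ i ∈ Qset t 0, v i * r3 t i = ∑ i ∈ Qset t 0, v i :=
    Finset.sum_congr rfl fun i hi => by
      have h := mem_Qset.mp hi
      rw [r3, if_pos (by omega), mul_one]
  have c1 : ∑ i ∈ Qset t 1, v i * r3 t i = -∑ i ∈ Qset t 1, v i := by
    rw [← Finset.sum_neg_distrib]
    refine Finset.sum_congr rfl fun i hi => ?_
    have h := mem_Qset.mp hi
    rw [r3, if_neg (by omega)]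
    ring
  have c2 : ∑ i ∈ Qset t 2, v i * r3 t i = ∑ i ∈ Qset t 2, v i :=
    Finset.sum_congr rfl fun i hi => by
      have h := mem_Qset.mp hi
      rw [r3, if_pos (by omega), mul_one]
  have c3 : ∑ i ∈ Qset t 3, v i * r3 t i = -∑ i ∈ Qset t 3, v i := by
    rw [← Finset.sum_neg_distrib]
    refine Finset.sum_congr rfl fun i hi => ?_
    have h := mem_Qset.mp hi
    rw [r3, if_neg (by omega)]
    ring
  rw [c0, c1, c2, c3]
  ring

lemma orth_sum {t : ℕ} (v w : Fin (4 * t) → ℤ) (hv : IsPMVector t v) (hw : IsPMVector t w) :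
    ∑ i, v i * w i = ∑ i, v i + ∑ i, w i
      + 4 * ((univ.filter fun i => v i = -1 ∧ w i = -1).card : ℤ) - 4 * t := by
  have key : ∀ i : Fin (4*t), v i * w i
      = v i + w i + (if v i = -1 ∧ w i = -1 then (4:ℤ) else 0) - 1 := by
    intro i
    rcases hv i with h1 | h1 <;> rcases hw i with h2 | h2 <;> simp [h1, h2] <;> norm_num
  rw [Finset.sum_congr rfl fun i _ => key i]
  rw [Finset.sum_sub_distrib, Finset.sum_add_distrib, Finset.sum_add_distrib]
  have h4 : ∑ i : Fin (4*t), (if v i = -1 ∧ w i = -1 then (4:ℤ) else 0)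
      = 4 * ((univ.filter fun i => v i = -1 ∧ w i = -1).card : ℤ) := by
    rw [← Finset.sum_filter, Finset.sum_const]
    push_cast
    ring
  rw [h4, Finset.sum_const, Finset.card_univ, Fintype.card_fin]
  push_cast
  ring

lemma sum_zero_of_orth_r1 {t : ℕ} {v : Fin (4 * t) → ℤ} (h : Orth t v (r1 t)) :
    ∑ i, v i = 0 := by
  have h' : ∑ i, v i * r1 t i = 0 := h
  simpa [r1] using h'

lemma vertex_counts {t : ℕ} {v : Fin (4 * t) → ℤ} (hv : IsVertex t v) :
    negCount t v 0 ≤ t ∧ negCount t v 1 = t - negCount t v 0 ∧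
      negCount t v 2 = t - negCount t v 0 ∧ negCount t v 3 = negCount t v 0 := by
  obtain ⟨hpm, h1, h2, h3⟩ := hv
  have q0 := quarter_sum hpm (show (0:ℕ) < 4 by norm_num)
  have q1 := quarter_sum hpm (show (1:ℕ) < 4 by norm_num)
  have q2 := quarter_sum hpm (show (2:ℕ) < 4 by norm_num)
  have q3 := quarter_sum hpm (show (3:ℕ) < 4 by norm_num)
  have e1 : ∑ i, v i * r1 t i = 0 := h1
  have e2 : ∑ i, v i * r2 t i = 0 := h2
  have e3 : ∑ i, v i * r3 t i = 0 := h3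
  rw [sum_r1, q0, q1, q2, q3] at e1
  rw [sum_r2, q0, q1, q2, q3] at e2
  rw [sum_r3, q0, q1, q2, q3] at e3
  omega

lemma vertex_of_counts {t : ℕ} {v : Fin (4 * t) → ℤ} (hpm : IsPMVector t v)
    (h1 : negCount t v 0 + negCount t v 1 + negCount t v 2 + negCount t v 3 = 2 * t)
    (h2 : negCount t v 0 + negCount t v 1 = t)
    (h3 : negCount t v 0 + negCount t v 2 = t) :
    IsVertex t v := by
  have q0 := quarter_sum hpm (show (0:ℕ) < 4 by norm_num)
  have q1 := quarter_sum hpm (show (1:ℕ) < 4 by norm_num)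
  have q2 := quarter_sum hpm (show (2:ℕ) < 4 by norm_num)
  have q3 := quarter_sum hpm (show (3:ℕ) < 4 by norm_num)
  refine ⟨hpm, ?_, ?_, ?_⟩
  · show ∑ i, v i * r1 t i = 0
    rw [sum_r1, q0, q1, q2, q3]
    omega
  · show ∑ i, v i * r2 t i = 0
    rw [sum_r2, q0, q1, q2, q3]
    omega
  · show ∑ i, v i * r3 t i = 0
    rw [sum_r3, q0, q1, q2, q3]
    omega

lemma orth_iff {t : ℕ} {v w : Fin (4 * t) → ℤ} (hv : IsVertex t v) (hw : IsVertex t w) :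
    Orth t v w ↔ ((univ.filter fun i => v i = -1 ∧ w i = -1).card = t) := by
  have h := orth_sum v w hv.1 hw.1
  rw [sum_zero_of_orth_r1 hv.2.1, sum_zero_of_orth_r1 hw.2.1] at h
  have : Orth t v w ↔ (∑ i, v i * w i = 0) := Iff.rfl
  rw [this, h]
  omega

set_option linter.unusedVariables false in
set_option maxHeartbeats 1000000 in
/-- for a `k`-vertex `v` of `G_t` with `0 ≤ k ≤ ⌊t/2⌋` and
`0 ≤ s ≤ ⌊t/2⌋`, there exists an `s`-vertex orthogonal to `v` iff `s ≥ ⌈t/2⌉ - k`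
(equivalently `2s + 2k - t ≥ 0`). -/
theorem stmt_9 (t k : ℕ) (ht : 0 < t) (hk : k ≤ t / 2) (v : Fin (4 * t) → ℤ)
    (hv : IsKVertex t k v) (s : ℕ) (hs : s ≤ t / 2) :
    (∃ w : Fin (4 * t) → ℤ, IsKVertex t s w ∧ Orth t v w) ↔
      (((t + 1) / 2 : ℕ) : ℤ) - (k : ℤ) ≤ (s : ℤ) := by
  obtain ⟨hvv, hvk⟩ := hv
  have hvc := vertex_counts hvv
  have hkt : 2 * k ≤ t := by omega
  have hst : 2 * s ≤ t := by omega
  constructor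
  · rintro ⟨w, ⟨hwv, hws⟩, horth⟩
    have hwc := vertex_counts hwv
    have hN := (orth_iff hvv hwv).mp horth
    have hsplit := card_split (t := t) (fun i => v i = -1 ∧ w i = -1)
    have key : ∀ j : ℕ, j < 4 →
        negCount t v j + negCount t w j
          ≤ t + ((Qset t j).filter fun i => v i = -1 ∧ w i = -1).card := by
      intro j hj
      have e : ((Qset t j).filter fun i => v i = -1 ∧ w i = -1)
          = ((Qset t j).filter fun i => v i = -1) ∩ ((Qset t j).filter fun i => w i = -1) := by
        ext i
        simp only [Finset.mem_filter, Finset.mem_inter]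
        tauto
      have hu := Finset.card_union_add_card_inter
        ((Qset t j).filter fun i => v i = -1) ((Qset t j).filter fun i => w i = -1)
      have hsub : ((Qset t j).filter fun i => v i = -1)
          ∪ ((Qset t j).filter fun i => w i = -1) ⊆ Qset t j :=
        Finset.union_subset (Finset.filter_subset _ _) (Finset.filter_subset _ _)
      have hle := Finset.card_le_card hsub
      rw [card_Qset t j hj] at hle
      rw [negCount_eq, negCount_eq, e]
      omega
    have k1 := key 1 (by norm_num)
    have k2 := key 2 (by norm_num)
    have hv1 : negCount t v 1 = t - k := by omega
    have hw1 : negCount t w 1 = t - s := by omega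
    have hv2 : negCount t v 2 = t - k := by omega
    have hw2 : negCount t w 2 = t - s := by omega
    omega
  · intro hle
    have hts : t ≤ 2 * k + 2 * s := by omega
    -- cardinalities of the positive parts of each quarter of v
    have cR : ∀ j : ℕ, j < 4 →
        ((Qset t j).filter (fun i => ¬ v i = -1)).card = t - negCount t v j := by
      intro j hj
      have h := Finset.card_filter_add_card_filter_not
        (s := Qset t j) (p := fun i => v i = -1)
      rw [card_Qset t j hj] at h
      rw [← negCount_eq] at h
      omega
    have cR0 : ((Qset t 0).filter (fun i => ¬ v i = -1)).card = t - k := by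
      rw [cR 0 (by norm_num)]; omega
    have cR1 : ((Qset t 1).filter (fun i => ¬ v i = -1)).card = k := by
      rw [cR 1 (by norm_num)]; omega
    have cR2 : ((Qset t 2).filter (fun i => ¬ v i = -1)).card = k := by
      rw [cR 2 (by norm_num)]; omega
    have cR3 : ((Qset t 3).filter (fun i => ¬ v i = -1)).card = t - k := by
      rw [cR 3 (by norm_num)]; omega
    have cP1 : ((Qset t 1).filter (fun i => v i = -1)).card = t - k := by
      rw [← negCount_eq]; omega
    have cP2 : ((Qset t 2).filter (fun i => v i = -1)).card = t - k := by
      rw [← negCount_eq]; omega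
    -- the parameter b
    have hb1 : k ≤ max (max k s) (t - k - s) := le_trans (le_max_left _ _) (le_max_left _ _)
    have hb2 : s ≤ max (max k s) (t - k - s) := le_trans (le_max_right _ _) (le_max_left _ _)
    have hb3 : t - k - s ≤ max (max k s) (t - k - s) := le_max_right _ _
    have hb4 : max (max k s) (t - k - s) ≤ t - s :=
      max_le (max_le (by omega) (by omega)) (by omega)
    have hb5 : max (max k s) (t - k - s) ≤ t - k :=
      max_le (max_le (by omega) (by omega)) (by omega)
    have hb6 : max (max k s) (t - k - s) ≤ k + s :=
      max_le (max_le (by omega) (by omega)) (by omega)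
    obtain ⟨b, hbdef⟩ : ∃ b : ℕ, b = max (max k s) (t - k - s) := ⟨_, rfl⟩
    rw [← hbdef] at hb1 hb2 hb3 hb4 hb5 hb6
    clear hbdef
    -- choose the six pieces
    obtain ⟨A1, hA1sub, hA1card⟩ := Finset.exists_subset_card_eq
      (s := ((Qset t 0).filter (fun i => ¬ v i = -1))) (n := s) (by rw [cR0]; omega)
    obtain ⟨B, hBsub, hBcard⟩ := Finset.exists_subset_card_eq
      (s := ((Qset t 1).filter (fun i => v i = -1))) (n := b) (by rw [cP1]; omega)
    obtain ⟨B', hB'sub, hB'card⟩ := Finset.exists_subset_card_eq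
      (s := ((Qset t 1).filter (fun i => ¬ v i = -1))) (n := (t - s - b)) (by rw [cR1]; omega)
    obtain ⟨C, hCsub, hCcard⟩ := Finset.exists_subset_card_eq
      (s := ((Qset t 2).filter (fun i => v i = -1))) (n := (t - b)) (by rw [cP2]; omega)
    obtain ⟨C', hC'sub, hC'card⟩ := Finset.exists_subset_card_eq
      (s := ((Qset t 2).filter (fun i => ¬ v i = -1))) (n := (t - s - (t - b))) (by rw [cR2]; omega)
    obtain ⟨D1, hD1sub, hD1card⟩ := Finset.exists_subset_card_eq
      (s := ((Qset t 3).filter (fun i => ¬ v i = -1))) (n := s) (by rw [cR3]; omega)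
    obtain ⟨F, hFdef⟩ : ∃ F : Finset (Fin (4 * t)),
        F = A1 ∪ B ∪ B' ∪ C ∪ C' ∪ D1 := ⟨_, rfl⟩
    -- quarter memberships
    have hA1Q : A1 ⊆ Qset t 0 := hA1sub.trans (Finset.filter_subset _ _)
    have hBQ : B ⊆ Qset t 1 := hBsub.trans (Finset.filter_subset _ _)
    have hB'Q : B' ⊆ Qset t 1 := hB'sub.trans (Finset.filter_subset _ _)
    have hCQ : C ⊆ Qset t 2 := hCsub.trans (Finset.filter_subset _ _)
    have hC'Q : C' ⊆ Qset t 2 := hC'sub.trans (Finset.filter_subset _ _)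
    have hD1Q : D1 ⊆ Qset t 3 := hD1sub.trans (Finset.filter_subset _ _)
    have dis : ∀ (j j' : ℕ) (X : Finset (Fin (4 * t))), j < 4 → j' < 4 → j ≠ j' →
        X ⊆ Qset t j' → Qset t j ∩ X = ∅ := by
      intro j j' X hj hj' hne hX
      exact Finset.disjoint_iff_inter_eq_empty.mp
        ((disjoint_Qset t hj hj' hne).mono_right hX)
    -- intersections of quarters with F
    have hQ0F : Qset t 0 ∩ F = A1 := by
      rw [hFdef, Finset.inter_union_distrib_left, Finset.inter_union_distrib_left,
        Finset.inter_union_distrib_left, Finset.inter_union_distrib_left,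
        Finset.inter_union_distrib_left,
        Finset.inter_eq_right.mpr hA1Q,
        dis 0 1 B (by norm_num) (by norm_num) (by norm_num) hBQ,
        dis 0 1 B' (by norm_num) (by norm_num) (by norm_num) hB'Q,
        dis 0 2 C (by norm_num) (by norm_num) (by norm_num) hCQ,
        dis 0 2 C' (by norm_num) (by norm_num) (by norm_num) hC'Q,
        dis 0 3 D1 (by norm_num) (by norm_num) (by norm_num) hD1Q]
      simp
    have hQ1F : Qset t 1 ∩ F = B ∪ B' := by
      rw [hFdef, Finset.inter_union_distrib_left, Finset.inter_union_distrib_left,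
        Finset.inter_union_distrib_left, Finset.inter_union_distrib_left,
        Finset.inter_union_distrib_left,
        Finset.inter_eq_right.mpr hBQ,
        Finset.inter_eq_right.mpr hB'Q,
        dis 1 0 A1 (by norm_num) (by norm_num) (by norm_num) hA1Q,
        dis 1 2 C (by norm_num) (by norm_num) (by norm_num) hCQ,
        dis 1 2 C' (by norm_num) (by norm_num) (by norm_num) hC'Q,
        dis 1 3 D1 (by norm_num) (by norm_num) (by norm_num) hD1Q]
      simp
    have hQ2F : Qset t 2 ∩ F = C ∪ C' := by
      rw [hFdef, Finset.inter_union_distrib_left, Finset.inter_union_distrib_left,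
        Finset.inter_union_distrib_left, Finset.inter_union_distrib_left,
        Finset.inter_union_distrib_left,
        Finset.inter_eq_right.mpr hCQ,
        Finset.inter_eq_right.mpr hC'Q,
        dis 2 0 A1 (by norm_num) (by norm_num) (by norm_num) hA1Q,
        dis 2 1 B (by norm_num) (by norm_num) (by norm_num) hBQ,
        dis 2 1 B' (by norm_num) (by norm_num) (by norm_num) hB'Q,
        dis 2 3 D1 (by norm_num) (by norm_num) (by norm_num) hD1Q]
      simp
    have hQ3F : Qset t 3 ∩ F = D1 := by
      rw [hFdef, Finset.inter_union_distrib_left, Finset.inter_union_distrib_left,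
        Finset.inter_union_distrib_left, Finset.inter_union_distrib_left,
        Finset.inter_union_distrib_left,
        Finset.inter_eq_right.mpr hD1Q,
        dis 3 0 A1 (by norm_num) (by norm_num) (by norm_num) hA1Q,
        dis 3 1 B (by norm_num) (by norm_num) (by norm_num) hBQ,
        dis 3 1 B' (by norm_num) (by norm_num) (by norm_num) hB'Q,
        dis 3 2 C (by norm_num) (by norm_num) (by norm_num) hCQ,
        dis 3 2 C' (by norm_num) (by norm_num) (by norm_num) hC'Q]
      simp
    -- the vector w
    obtain ⟨w, hwdef⟩ : ∃ w : Fin (4 * t) → ℤ,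
        w = fun i => if i ∈ F then (-1 : ℤ) else 1 := ⟨_, rfl⟩
    have hwpm : IsPMVector t w := by
      intro i
      rw [hwdef]
      dsimp only
      split <;> simp
    have hwneg : ∀ i, w i = -1 ↔ i ∈ F := by
      intro i
      rw [hwdef]
      dsimp only
      split <;> rename_i h <;> simp [h]
    -- neg counts of w
    have nw : ∀ j : ℕ, negCount t w j = (Qset t j ∩ F).card := by
      intro j
      rw [negCount_eq, Finset.filter_congr (fun i _ => hwneg i),
        Finset.filter_mem_eq_inter]
    have dBB' : Disjoint B B' :=
      ((Finset.disjoint_filter_filter_not (Qset t 1) (Qset t 1)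
        (fun i => v i = -1)).mono hBsub hB'sub)
    have dCC' : Disjoint C C' :=
      ((Finset.disjoint_filter_filter_not (Qset t 2) (Qset t 2)
        (fun i => v i = -1)).mono hCsub hC'sub)
    have hnw0 : negCount t w 0 = s := by rw [nw 0, hQ0F, hA1card]
    have hnw1 : negCount t w 1 = t - s := by
      rw [nw 1, hQ1F, Finset.card_union_of_disjoint dBB', hBcard, hB'card]
      omega
    have hnw2 : negCount t w 2 = t - s := by
      rw [nw 2, hQ2F, Finset.card_union_of_disjoint dCC', hCcard, hC'card]
      omega
    have hnw3 : negCount t w 3 = s := by rw [nw 3, hQ3F, hD1card]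
    have hwv : IsVertex t w :=
      vertex_of_counts hwpm (by omega) (by omega) (by omega)
    refine ⟨w, ⟨hwv, hnw0⟩, ?_⟩
    -- orthogonality
    rw [orth_iff hvv hwv]
    rw [card_split (t := t)]
    have eM : ∀ j : ℕ, j < 4 → ((Qset t j).filter fun i => v i = -1 ∧ w i = -1)
        = ((Qset t j).filter fun i => v i = -1) ∩ (Qset t j ∩ F) := by
      intro j hj
      ext i
      simp only [Finset.mem_filter, Finset.mem_inter, hwneg]
      tauto
    have M0 : ((Qset t 0).filter fun i => v i = -1 ∧ w i = -1).card = 0 := by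
      rw [eM 0 (by norm_num), hQ0F]
      rw [Finset.card_eq_zero, ← Finset.disjoint_iff_inter_eq_empty]
      exact (Finset.disjoint_filter_filter_not (Qset t 0) (Qset t 0)
        (fun i => v i = -1)).mono_right hA1sub
    have M3 : ((Qset t 3).filter fun i => v i = -1 ∧ w i = -1).card = 0 := by
      rw [eM 3 (by norm_num), hQ3F]
      rw [Finset.card_eq_zero, ← Finset.disjoint_iff_inter_eq_empty]
      exact (Finset.disjoint_filter_filter_not (Qset t 3) (Qset t 3)
        (fun i => v i = -1)).mono_right hD1sub
    have M1 : ((Qset t 1).filter fun i => v i = -1 ∧ w i = -1).card = b := by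
      rw [eM 1 (by norm_num), hQ1F, Finset.inter_union_distrib_left,
        Finset.inter_eq_right.mpr hBsub,
        Finset.disjoint_iff_inter_eq_empty.mp
          ((Finset.disjoint_filter_filter_not (Qset t 1) (Qset t 1)
            (fun i => v i = -1)).mono_right hB'sub),
        Finset.union_empty, hBcard]
    have M2 : ((Qset t 2).filter fun i => v i = -1 ∧ w i = -1).card = t - b := by
      rw [eM 2 (by norm_num), hQ2F, Finset.inter_union_distrib_left,
        Finset.inter_eq_right.mpr hCsub,
        Finset.disjoint_iff_inter_eq_empty.mp
          ((Finset.disjoint_filter_filter_not (Qset t 2) (Qset t 2)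
            (fun i => v i = -1)).mono_right hC'sub),
        Finset.union_empty, hCcard]
    rw [M0, M1, M2, M3]
    omega
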